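/- Let λ = p^{a_j}/(d_j − dᵢ p)^{aᵢ+a_j} and define f′_ℓ(x) = λ (d_j xᵢ − dᵢ x_j)^{aᵢ+a_j} ∏_{k ∉ {i,j}} x_k^{a_k}. Then f′_ℓ(x) ≤ ∏_{k=1}^n x_k^{a_k} for every x ∈ W_{ij}. -/

import Mathlib

open Real Finset

/-- `f′_ℓ` is a minorant of `f` on `W_{ij}`. -/
theorem lower_minorant_on_wedge (n : ℕ) (hn : 2 ≤ n) (a : Fin n → ℝ)
    (ha : ∀ k, 0 < a k) (i j : Fin n) (hij : i ≠ j)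
    (p q : ℝ) (hp : 0 < p) (hpq : p < q)
    (di dj lam : ℝ)
    (hdi : di = q ^ (-(a j / (a i + a j))) - p ^ (-(a j / (a i + a j))))
    (hdj : dj = q ^ (a i / (a i + a j)) - p ^ (a i / (a i + a j)))
    (hlam : lam = p ^ a j / (dj - di * p) ^ (a i + a j)) :
    ∀ x : Fin n → ℝ, (∀ k, 0 ≤ x k) → p * x i ≤ x j → x j ≤ q * x i →
      lam * (dj * x i - di * x j) ^ (a i + a j) *
          ∏ k ∈ ({i, j} : Finset (Fin n))ᶜ, x k ^ a k ≤
        ∏ k, x k ^ a k := by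
  intro x hx hpx hxq
  have hA : 0 < a i := ha i
  have hB : 0 < a j := ha j
  have hAB : 0 < a i + a j := by linarith
  have hq : 0 < q := hp.trans hpq
  set α : ℝ := a j / (a i + a j) with hα'
  have hα0 : 0 < α := div_pos hB hAB
  have hα1 : α < 1 := by rw [hα', div_lt_one hAB]; linarith
  have hβ : a i / (a i + a j) = 1 - α := by
    rw [hα', eq_sub_iff_add_eq, ← add_div, div_self hAB.ne']
  rw [hβ] at hdj
  have hqp : 0 < q - p := by linarith
  have hdj0 : 0 < dj := by
    rw [hdj]
    have := Real.rpow_lt_rpow hp.le hpq (by linarith : (0:ℝ) < 1 - α)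
    linarith
  have hdi0 : di < 0 := by
    rw [hdi]
    have := Real.rpow_lt_rpow_of_neg hp hpq (by linarith : -α < 0)
    linarith
  have hqmα : (0:ℝ) < q ^ (-α) := Real.rpow_pos_of_pos hq _
  have hpα : (0:ℝ) < p ^ α := Real.rpow_pos_of_pos hp _
  have hqα : (0:ℝ) < q ^ α := Real.rpow_pos_of_pos hq _
  -- rpow arithmetic facts
  have e1 : q ^ α * q ^ (1 - α) = q := by
    rw [← Real.rpow_add hq, show α + (1 - α) = (1:ℝ) by ring, Real.rpow_one]
  have e2 : p ^ α * p ^ (1 - α) = p := by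
    rw [← Real.rpow_add hp, show α + (1 - α) = (1:ℝ) by ring, Real.rpow_one]
  have e3 : q ^ α * q ^ (-α) = 1 := by
    rw [← Real.rpow_add hq, show α + -α = (0:ℝ) by ring, Real.rpow_zero]
  have e4 : p ^ α * p ^ (-α) = 1 := by
    rw [← Real.rpow_add hp, show α + -α = (0:ℝ) by ring, Real.rpow_zero]
  have hdip : dj - di * p = q ^ (-α) * (q - p) := by
    rw [hdj, hdi]
    have h1 : p ^ (-α) * p = p ^ (1 - α) := by
      rw [show (1:ℝ) - α = -α + 1 by ring, Real.rpow_add hp, Real.rpow_one]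
    have h2 : q ^ (-α) * q = q ^ (1 - α) := by
      rw [show (1:ℝ) - α = -α + 1 by ring, Real.rpow_add hq, Real.rpow_one]
    linear_combination h1 - h2
  have hD : 0 < dj - di * p := by rw [hdip]; positivity
  set c : ℝ := p ^ α / (dj - di * p) with hc'
  have hc0 : 0 < c := div_pos hpα hD
  -- the core chord inequality, for r ∈ [p, q]
  have key : ∀ r : ℝ, p ≤ r → r ≤ q → c * (dj - di * r) ≤ r ^ α ∧ 0 < dj - di * r := by
    intro r hpr hrq
    have hr0 : 0 < r := hp.trans_le hpr
    have hDr : 0 < dj - di * r := by nlinarith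
    refine ⟨?_, hDr⟩
    -- chord below the graph by concavity
    have hθ1 : (0:ℝ) ≤ (q - r) / (q - p) := div_nonneg (by linarith) (by linarith)
    have hθ2 : (0:ℝ) ≤ (r - p) / (q - p) := div_nonneg (by linarith) (by linarith)
    have hθs : (q - r) / (q - p) + (r - p) / (q - p) = 1 := by field_simp; ring
    have hcon := (Real.strictConcaveOn_rpow hα0 hα1).concaveOn.2
      (Set.mem_Ici.mpr hp.le) (Set.mem_Ici.mpr hq.le) hθ1 hθ2 hθs
    simp only [smul_eq_mul] at hcon
    rw [show (q - r) / (q - p) * p + (r - p) / (q - p) * q = r by field_simp; ring] at hcon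
    have chord : p ^ α * (q - r) + q ^ α * (r - p) ≤ r ^ α * (q - p) := by
      have := mul_le_mul_of_nonneg_right hcon hqp.le
      calc p ^ α * (q - r) + q ^ α * (r - p)
          = ((q - r) / (q - p) * p ^ α + (r - p) / (q - p) * q ^ α) * (q - p) := by
            field_simp
        _ ≤ r ^ α * (q - p) := this
    have hid : q ^ α * (p ^ α * (dj - di * r)) = p ^ α * (q - r) + q ^ α * (r - p) := by
      rw [hdj, hdi]
      linear_combination p ^ α * e1 - q ^ α * e2 - (p ^ α * r) * e3 + (q ^ α * r) * e4
    rw [hc', div_mul_eq_mul_div, div_le_iff₀ hD]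
    have step : q ^ α * (p ^ α * (dj - di * r)) ≤ q ^ α * (r ^ α * (dj - di * p)) := by
      rw [hid, hdip, show q ^ α * (r ^ α * (q ^ (-α) * (q - p)))
        = (q ^ α * q ^ (-α)) * (r ^ α * (q - p)) by ring, e3, one_mul]
      exact chord
    exact le_of_mul_le_mul_left step hqα
  -- split the product
  have hsplit : ∏ k, x k ^ a k
      = (x i ^ a i * x j ^ a j) * ∏ k ∈ ({i, j} : Finset (Fin n))ᶜ, x k ^ a k := by
    rw [← Finset.prod_mul_prod_compl ({i, j} : Finset (Fin n)) (fun k => x k ^ a k),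
      Finset.prod_pair hij]
  have hP : 0 ≤ ∏ k ∈ ({i, j} : Finset (Fin n))ᶜ, x k ^ a k :=
    Finset.prod_nonneg fun k _ => Real.rpow_nonneg (hx k) _
  rw [hsplit]
  rcases eq_or_lt_of_le (hx i) with hu | hu
  · -- x i = 0, hence x j = 0
    have hv : x j = 0 := le_antisymm (by simpa [← hu] using hxq) (hx j)
    rw [← hu, hv]
    simp only [mul_zero, sub_zero, mul_zero, sub_self]
    rw [Real.zero_rpow hAB.ne', mul_zero, zero_mul]
    positivity
  · -- x i > 0
    have hv : 0 < x j := lt_of_lt_of_le (by positivity) hpx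
    set u := x i
    set v := x j
    set r := v / u with hr'
    have hru : r * u = v := div_mul_cancel₀ v hu.ne'
    have hpr : p ≤ r := (le_div_iff₀ hu).mpr (by linarith)
    have hrq : r ≤ q := (div_le_iff₀ hu).mpr (by linarith)
    obtain ⟨hchord, hDr⟩ := key r hpr hrq
    have hr0 : 0 < r := hp.trans_le hpr
    -- rewrite lam as c ^ (a i + a j)
    have hlamc : lam = c ^ (a i + a j) := by
      rw [hlam, hc', Real.div_rpow hpα.le hD.le,
        ← Real.rpow_mul hp.le, show α * (a i + a j) = a j by
          rw [hα', div_mul_cancel₀ _ hAB.ne']]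
    have hbase : dj * u - di * v = (dj - di * r) * u := by
      rw [hr']; field_simp
    have core : lam * (dj * u - di * v) ^ (a i + a j) ≤ u ^ a i * v ^ a j := by
      rw [hlamc, hbase, Real.mul_rpow hDr.le hu.le, ← mul_assoc,
        ← Real.mul_rpow hc0.le hDr.le]
      have h1 : (c * (dj - di * r)) ^ (a i + a j) ≤ (r ^ α) ^ (a i + a j) :=
        Real.rpow_le_rpow (by positivity) hchord hAB.le
      have h2 : (r ^ α) ^ (a i + a j) = r ^ a j := by
        rw [← Real.rpow_mul hr0.le, show α * (a i + a j) = a j by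
          rw [hα', div_mul_cancel₀ _ hAB.ne']]
      calc (c * (dj - di * r)) ^ (a i + a j) * u ^ (a i + a j)
          ≤ r ^ a j * u ^ (a i + a j) := by
            rw [← h2] at *; exact mul_le_mul_of_nonneg_right h1 (by positivity)
        _ = u ^ a i * v ^ a j := by
            rw [Real.rpow_add hu, ← hru, Real.mul_rpow hr0.le hu.le]; ring
    calc lam * (dj * u - di * v) ^ (a i + a j) *
          ∏ k ∈ ({i, j} : Finset (Fin n))ᶜ, x k ^ a k
        ≤ (u ^ a i * v ^ a j) * ∏ k ∈ ({i, j} : Finset (Fin n))ᶜ, x k ^ a k :=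
          mul_le_mul_of_nonneg_right core hP
      _ = _ := rfl
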